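/- Let n, h, g be positive integers with 1 ≤ g ≤ h, d a positive divisor of n, i = d mod h, and f(d) = (⌊(d − 1 − gcd(d,g))/h⌋ + 1)·(n/d). If gcd(d,g) ≥ i, then f(d) ≤ n/h when g ≠ h, and f(d) ≤ (n−1)/h when g = h. -/
import Mathlib

set_option maxHeartbeats 1000000

theorem stmt12 (n h g d : ℕ) (hn : 0 < n) (hg1 : 1 ≤ g) (hgh : g ≤ h)
    (hd : d ∣ n) (hd0 : 0 < d) (F : ℚ)
    (hF : F = (((((d : ℤ) - 1 - (Nat.gcd d g : ℤ)) / (h : ℤ) + 1)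
        * ((n : ℤ) / (d : ℤ)) : ℤ) : ℚ))
    (hgi : d % h ≤ Nat.gcd d g) :
    (g ≠ h → F ≤ (n : ℚ) / (h : ℚ)) ∧
    (g = h → F ≤ ((n : ℚ) - 1) / (h : ℚ)) := by
  have hh : 0 < h := hg1.trans hgh
  obtain ⟨m, hm⟩ := hd
  have hm1 : 1 ≤ m := by
    rcases Nat.eq_zero_or_pos m with h0 | h0
    · simp [h0] at hm; omega
    · exact h0
  have hnd : (n : ℤ) / (d : ℤ) = (m : ℤ) := by
    subst hm; push_cast
    exact Int.mul_ediv_cancel_left _ (by exact_mod_cast hd0.ne')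
  set c : ℕ := Nat.gcd d g with hc
  set e : ℤ := ((d : ℤ) - 1 - (c : ℤ)) / (h : ℤ) with he
  set q : ℕ := d / h with hq
  set k : ℕ := d % h with hk
  have hdm : (h : ℤ) * e + ((d : ℤ) - 1 - (c : ℤ)) % (h : ℤ) = (d : ℤ) - 1 - (c : ℤ) :=
    Int.mul_ediv_add_emod _ _
  set r : ℤ := ((d : ℤ) - 1 - (c : ℤ)) % (h : ℤ) with hr
  have hr0 : 0 ≤ r := Int.emod_nonneg _ (by exact_mod_cast hh.ne')
  have hrlt : r < (h : ℤ) := Int.emod_lt_of_pos _ (by exact_mod_cast hh)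
  have hdqk : h * q + k = d := Nat.div_add_mod d h
  have hkc : k ≤ c := hgi
  have hc1 : 1 ≤ c := Nat.gcd_pos_of_pos_left g hd0
  have hhz : (0:ℤ) < (h:ℤ) := by exact_mod_cast hh
  -- general bound : e + 1 ≤ q
  have hkey : e + 1 ≤ (q : ℤ) := by
    have hmul : (h : ℤ) * (e + 1) < (h : ℤ) * ((q : ℤ) + 1) := by
      have h1 : (h : ℤ) * (q : ℤ) + (k : ℤ) = (d : ℤ) := by exact_mod_cast hdqk
      have h2 : (k : ℤ) ≤ (c : ℤ) := by exact_mod_cast hkc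
      nlinarith
    have := lt_of_mul_lt_mul_left hmul (le_of_lt hhz)
    omega
  have hqhd : h * q ≤ d := by omega
  refine ⟨fun _ => ?_, fun hgheq => ?_⟩
  · -- F ≤ n / h
    rw [hF, hnd, le_div_iff₀ (by exact_mod_cast hh)]
    have hint : (e + 1) * (m : ℤ) * (h : ℤ) ≤ (n : ℤ) := by
      have hn' : (d : ℤ) * (m : ℤ) = (n : ℤ) := by exact_mod_cast hm.symm
      have hqh : (h : ℤ) * (q : ℤ) ≤ (d : ℤ) := by exact_mod_cast hqhd
      have s1 : (e + 1) * ((m : ℤ) * (h : ℤ)) ≤ (q : ℤ) * ((m : ℤ) * (h : ℤ)) :=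
        mul_le_mul_of_nonneg_right hkey (by positivity)
      have s2 : (h : ℤ) * (q : ℤ) * (m : ℤ) ≤ (d : ℤ) * (m : ℤ) :=
        mul_le_mul_of_nonneg_right hqh (by positivity)
      linarith
    calc (((e + 1) * (m : ℤ) : ℤ) : ℚ) * (h : ℚ)
        = (((e + 1) * (m : ℤ) * (h : ℤ) : ℤ) : ℚ) := by push_cast; ring
      _ ≤ ((n : ℤ) : ℚ) := by exact_mod_cast hint
      _ = (n : ℚ) := by push_cast; ring
  · -- g = h case
    rw [hF, hnd, le_div_iff₀ (by exact_mod_cast hh)]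
    have hint : (e + 1) * (m : ℤ) * (h : ℤ) ≤ (n : ℤ) - 1 := by
      have hn' : (d : ℤ) * (m : ℤ) = (n : ℤ) := by exact_mod_cast hm.symm
      have h1 : (h : ℤ) * (q : ℤ) + (k : ℤ) = (d : ℤ) := by exact_mod_cast hdqk
      rcases Nat.eq_zero_or_pos k with hk0 | hk1
      · -- k = 0 : h ∣ d, c = h, stronger bound e + 1 ≤ q - 1
        have hch : c = h := by
          rw [hc, hgheq]
          exact Nat.gcd_eq_right (Nat.dvd_of_mod_eq_zero hk0)
        have hkey2 : e + 1 ≤ (q : ℤ) - 1 := by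
          have hmul : (h : ℤ) * (e + 1) < (h : ℤ) * (q : ℤ) := by
            have hc' : (c : ℤ) = (h : ℤ) := by exact_mod_cast hch
            have hk' : (k : ℤ) = 0 := by exact_mod_cast hk0
            nlinarith
          have := lt_of_mul_lt_mul_left hmul (le_of_lt hhz)
          omega
        have s1 : (e + 1) * ((m : ℤ) * (h : ℤ)) ≤ ((q : ℤ) - 1) * ((m : ℤ) * (h : ℤ)) :=
          mul_le_mul_of_nonneg_right hkey2 (by positivity)
        have hk' : (k : ℤ) = 0 := by exact_mod_cast hk0
        have s3 : (1:ℤ) ≤ (m : ℤ) * (h : ℤ) := by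
          have hm1' : (1:ℤ) ≤ (m : ℤ) := by exact_mod_cast hm1
          nlinarith
        have s2 : ((h : ℤ) * (q : ℤ)) * (m : ℤ) = (d : ℤ) * (m : ℤ) := by
          rw [show (h : ℤ) * (q : ℤ) = (d : ℤ) by linarith]
        linarith
      · have hk1' : (1:ℤ) ≤ (k : ℤ) := by exact_mod_cast hk1
        have hm1' : (1:ℤ) ≤ (m : ℤ) := by exact_mod_cast hm1
        have s1 : (e + 1) * ((m : ℤ) * (h : ℤ)) ≤ (q : ℤ) * ((m : ℤ) * (h : ℤ)) :=
          mul_le_mul_of_nonneg_right hkey (by positivity)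
        have s2 : (h : ℤ) * (q : ℤ) * (m : ℤ) ≤ ((d : ℤ) - (k : ℤ)) * (m : ℤ) :=
          mul_le_mul_of_nonneg_right (by linarith) (by positivity)
        have s3 : (1:ℤ) ≤ (k : ℤ) * (m : ℤ) := by nlinarith
        linarith
    calc (((e + 1) * (m : ℤ) : ℤ) : ℚ) * (h : ℚ)
        = (((e + 1) * (m : ℤ) * (h : ℤ) : ℤ) : ℚ) := by push_cast; ring
      _ ≤ (((n : ℤ) - 1 : ℤ) : ℚ) := by exact_mod_cast hint
      _ = (n : ℚ) - 1 := by push_cast; ring
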